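/- If f and g are convex nonnegative functions on [a,b] with a < b, then 2 f((a+b)/2) g((a+b)/2) ≤ (1/(b-a)) ∫_a^b f(x)g(x) dx + (1/6)M(a,b) + (1/3)N(a,b), where M(a,b) = f(a)g(a)+f(b)g(b) and N(a,b) = f(a)g(b)+f(b)g(a). -/

import Mathlib

open MeasureTheory intervalIntegral

theorem pachpatte_second (a b : ℝ) (hab : a < b) (f g : ℝ → ℝ)
    (hf : ConvexOn ℝ (Set.Icc a b) f) (hg : ConvexOn ℝ (Set.Icc a b) g)
    (hf0 : ∀ x ∈ Set.Icc a b, 0 ≤ f x) (hg0 : ∀ x ∈ Set.Icc a b, 0 ≤ g x)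
    (hint : IntervalIntegrable (fun x => f x * g x) MeasureTheory.volume a b) :
    2 * f ((a + b) / 2) * g ((a + b) / 2) ≤
      (1 / (b - a)) * ∫ x in a..b, f x * g x +
        (1 / 6) * (f a * g a + f b * g b) + (1 / 3) * (f a * g b + f b * g a) := by
  have hba : (0:ℝ) < b - a := by linarith
  set m := (a + b) / 2 with hm
  set M := f a * g a + f b * g b with hM
  set N := f a * g b + f b * g a with hN
  have hmem : m ∈ Set.Icc a b := by
    constructor
    · rw [hm]; linarith
    · rw [hm]; linarith
  have haI : a ∈ Set.Icc a b := Set.left_mem_Icc.2 hab.le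
  have hbI : b ∈ Set.Icc a b := Set.right_mem_Icc.2 hab.le
  have fa0 := hf0 a haI
  have fb0 := hf0 b hbI
  have ga0 := hg0 a haI
  have gb0 := hg0 b hbI
  -- pointwise bound
  have ptwise : ∀ x ∈ Set.Icc a b,
      (fun _ : ℝ => 4 * (f m * g m)) x ≤ (fun x => f x * g x + f (a+b-x) * g (a+b-x) +
        (2 * ((b-x)*(x-a)) * M + ((b-x)^2 + (x-a)^2) * N) / (b-a)^2) x := by
    intro x hx
    simp only
    set y := a + b - x with hy
    have hyI : y ∈ Set.Icc a b := by
      constructor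
      · rw [hy]; linarith [hx.2]
      · rw [hy]; linarith [hx.1]
    set t := (b - x)/(b - a) with htdef
    set s := (x - a)/(b - a) with hsdef
    have ht0 : 0 ≤ t := div_nonneg (by linarith [hx.2]) hba.le
    have hs0 : 0 ≤ s := div_nonneg (by linarith [hx.1]) hba.le
    have hts : t + s = 1 := by rw [htdef, hsdef]; field_simp; ring
    have hxe : t • a + s • b = x := by
      simp only [smul_eq_mul, htdef, hsdef]; field_simp; ring
    have hye : s • a + t • b = y := by
      simp only [smul_eq_mul, htdef, hsdef, hy]; field_simp; ring
    have hfm : f m ≤ (f x + f y)/2 := by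
      have h := hf.2 hx hyI (by norm_num : (0:ℝ) ≤ 1/2) (by norm_num : (0:ℝ) ≤ 1/2)
        (by norm_num : (1:ℝ)/2 + 1/2 = 1)
      have e : (1/2 : ℝ) • x + (1/2 : ℝ) • y = m := by
        simp only [smul_eq_mul, hy, hm]; ring
      rw [e] at h
      simp only [smul_eq_mul] at h
      linarith
    have hgm : g m ≤ (g x + g y)/2 := by
      have h := hg.2 hx hyI (by norm_num : (0:ℝ) ≤ 1/2) (by norm_num : (0:ℝ) ≤ 1/2)
        (by norm_num : (1:ℝ)/2 + 1/2 = 1)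
      have e : (1/2 : ℝ) • x + (1/2 : ℝ) • y = m := by
        simp only [smul_eq_mul, hy, hm]; ring
      rw [e] at h
      simp only [smul_eq_mul] at h
      linarith
    have hfx : f x ≤ t * f a + s * f b := by
      have h := hf.2 haI hbI ht0 hs0 hts
      rw [hxe] at h; simpa [smul_eq_mul] using h
    have hfy : f y ≤ s * f a + t * f b := by
      have h := hf.2 haI hbI hs0 ht0 (by linarith)
      rw [hye] at h; simpa [smul_eq_mul] using h
    have hgx : g x ≤ t * g a + s * g b := by
      have h := hg.2 haI hbI ht0 hs0 hts
      rw [hxe] at h; simpa [smul_eq_mul] using h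
    have hgy : g y ≤ s * g a + t * g b := by
      have h := hg.2 haI hbI hs0 ht0 (by linarith)
      rw [hye] at h; simpa [smul_eq_mul] using h
    have fx0 := hf0 x hx
    have fy0 := hf0 y hyI
    have gx0 := hg0 x hx
    have gy0 := hg0 y hyI
    have fm0 := hf0 m hmem
    have gm0 := hg0 m hmem
    have step1 : 4 * (f m * g m) ≤ (f x + f y) * (g x + g y) := by
      have h := mul_le_mul (by linarith : 2 * f m ≤ f x + f y)
        (by linarith : 2 * g m ≤ g x + g y) (by linarith) (by linarith)
      nlinarith [h]
    have h1 : f x * g y ≤ (t*f a + s*f b) * (s*g a + t*g b) :=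
      mul_le_mul hfx hgy gy0
        (by positivity)
    have h2 : f y * g x ≤ (s*f a + t*f b) * (t*g a + s*g b) :=
      mul_le_mul hfy hgx gx0
        (by positivity)
    have hsumeq : (t*f a + s*f b) * (s*g a + t*g b) + (s*f a + t*f b) * (t*g a + s*g b)
        = 2*t*s*M + (t^2+s^2)*N := by rw [hM, hN]; ring
    have step2 : f x * g y + f y * g x ≤ 2*t*s*M + (t^2+s^2)*N := by linarith
    have hts2 : 2*t*s*M + (t^2+s^2)*N
        = (2 * ((b-x)*(x-a)) * M + ((b-x)^2 + (x-a)^2) * N) / (b-a)^2 := by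
      rw [htdef, hsdef]; field_simp
    have hexp : (f x + f y)*(g x + g y) = f x*g x + f y*g y + (f x*g y + f y*g x) := by ring
    linarith [step1, step2, hts2.le, hts2.ge]
  -- integrability
  have hRint : IntervalIntegrable (fun x => f (a+b-x) * g (a+b-x)) volume a b := by
    have h := hint.comp_sub_left (a+b)
    simpa using h.symm
  have hPint : IntervalIntegrable
      (fun x => (2 * ((b-x)*(x-a)) * M + ((b-x)^2 + (x-a)^2) * N) / (b-a)^2) volume a b := by
    apply Continuous.intervalIntegrable
    fun_prop
  have main := intervalIntegral.integral_mono_on hab.le intervalIntegrable_const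
    ((hint.add hRint).add hPint) ptwise
  rw [intervalIntegral.integral_const,
    intervalIntegral.integral_add (hint.add hRint) hPint,
    intervalIntegral.integral_add hint hRint] at main
  have hrefl : (∫ x in a..b, f (a+b-x) * g (a+b-x)) = ∫ x in a..b, f x * g x := by
    have h := intervalIntegral.integral_comp_sub_left (a := a) (b := b)
      (fun x => f x * g x) (a+b)
    simpa using h
  have hQ : (∫ x in a..b, (2 * ((b-x)*(x-a)) * M + ((b-x)^2 + (x-a)^2) * N))
      = (b-a)^3 * (M/3 + 2*N/3) := by
    have hderiv : ∀ x ∈ Set.uIcc a b, HasDerivAt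
        (fun x => (N*(a^2+b^2) - 2*M*a*b)*x + ((M-N)*(a+b))*x^2 + (2*(N-M)/3)*x^3)
        (2 * ((b-x)*(x-a)) * M + ((b-x)^2 + (x-a)^2) * N) x := by
      intro x _
      have h1 := (hasDerivAt_id x).const_mul (N*(a^2+b^2) - 2*M*a*b)
      have h2 := (hasDerivAt_pow 2 x).const_mul ((M-N)*(a+b))
      have h3 := (hasDerivAt_pow 3 x).const_mul (2*(N-M)/3)
      refine ((h1.add h2).add h3).congr_deriv ?_
      push_cast
      ring
    rw [intervalIntegral.integral_eq_sub_of_hasDerivAt hderiv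
      (by apply Continuous.intervalIntegrable; fun_prop)]
    ring
  have hP : (∫ x in a..b, (2 * ((b-x)*(x-a)) * M + ((b-x)^2 + (x-a)^2) * N) / (b-a)^2)
      = (b-a) * (M/3 + 2*N/3) := by
    rw [intervalIntegral.integral_div, hQ,
      div_eq_iff (by positivity : ((b-a)^2 : ℝ) ≠ 0)]
    ring
  rw [hrefl, hP, smul_eq_mul] at main
  set I := ∫ x in a..b, f x * g x with hI
  clear_value m M N I
  have hsplit : (∫ x in a..b, (f x * g x + 1/6*M + 1/3*N))
      = I + (b-a)*(1/6*M) + (b-a)*(1/3*N) := by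
    rw [intervalIntegral.integral_add (hint.add intervalIntegrable_const) intervalIntegrable_const,
      intervalIntegral.integral_add hint intervalIntegrable_const,
      intervalIntegral.integral_const, intervalIntegral.integral_const, ← hI,
      smul_eq_mul, smul_eq_mul]
  rw [hsplit]
  have e2 : 1/(b-a) * (I + (b-a)*(1/6*M) + (b-a)*(1/3*N))
      = 1/(b-a)*I + 1/6*M + 1/3*N := by
    have hc : (1/(b-a))*(b-a) = 1 := by field_simp
    linear_combination (1/6*M + 1/3*N) * hc
  rw [e2]
  have h2 : (b-a) * (2*f m*g m) ≤ (b-a)*(1/(b-a)*I + 1/6*M + 1/3*N) := by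
    have e : (b-a)*(1/(b-a)*I + 1/6*M + 1/3*N) = I + (b-a)*(1/6*M+1/3*N) := by
      have hc : (b-a)*(1/(b-a)) = 1 := by field_simp
      linear_combination I * hc
    rw [e]
    linarith [main]
  exact (mul_le_mul_iff_right₀ hba).mp h2
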